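/- Let f ∈ C^∞(ℝ^d) and suppose there exists C ≥ 1 such that |x^β ∂^α f(x)| ≤ C^{|α|+|β|+1} M(α,β) for all α, β ∈ ℕ^d and x ∈ ℝ^d, where M(α,β) = (|α|!)^{1/2}·(max(|α|,|β|)!)^{1/2}. Then there exist constants C' > 0 and c > 0 such that for all multi-indices α, β with |β| ≤ |α| and all x ∈ ℝ^d, |x^β ∂^α f(x)| ≤ C'^{|α|+1} |α|! e^{−c|x|²}. -/

import Mathlib

open scoped BigOperators
open MeasureTheory

noncomputable section

/-- ℝ^d with the Euclidean norm. -/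
abbrev Rd (d : ℕ) := EuclideanSpace ℝ (Fin d)
/-- ℂ^d with the Euclidean norm. -/
abbrev Cd (d : ℕ) := EuclideanSpace ℂ (Fin d)

/-- Partial derivative in direction `j`. -/
noncomputable def pd {d : ℕ} {F : Type*} [NormedAddCommGroup F] [NormedSpace ℝ F]
    (j : Fin d) (f : Rd d → F) : Rd d → F :=
  fun x => fderiv ℝ f x (EuclideanSpace.single j 1)

/-- Iterated multi-index partial derivative `∂^α`. -/
noncomputable def mderiv {d : ℕ} {F : Type*} [NormedAddCommGroup F] [NormedSpace ℝ F]
    (α : Fin d → ℕ) (f : Rd d → F) : Rd d → F :=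
  (List.finRange d).foldr (fun j g => (pd j)^[α j] g) f

/-- `|α| = α_1 + ⋯ + α_d`. -/
def msize {d : ℕ} (α : Fin d → ℕ) : ℕ := ∑ j, α j

/-- `α! = α_1! ⋯ α_d!`. -/
def mfact {d : ℕ} (α : Fin d → ℕ) : ℕ := ∏ j, Nat.factorial (α j)

/-- `x^β = x_1^{β_1} ⋯ x_d^{β_d}`. -/
noncomputable def mpow {d : ℕ} (x : Rd d) (β : Fin d → ℕ) : ℝ := ∏ j, (x j) ^ (β j)

/-- `M(α,β) = (|α|!)^{1/2} · (max(|α|,|β|)!)^{1/2}`. -/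
noncomputable def Mab {d : ℕ} (α β : Fin d → ℕ) : ℝ :=
  Real.sqrt (Nat.factorial (msize α)) * Real.sqrt (Nat.factorial (max (msize α) (msize β)))

/-- The Japanese bracket `⟨x⟩ = (1 + |x|²)^{1/2}`. -/
noncomputable def jap {d : ℕ} (x : Rd d) : ℝ := Real.sqrt (1 + ‖x‖^2)

/-- The function `x ↦ x^β ∂^α f(x)`. -/
noncomputable def wD {d : ℕ} (α β : Fin d → ℕ) (f : Rd d → ℂ) : Rd d → ℂ :=
  fun x => (mpow x β : ℂ) * mderiv α f x

/-- The `L²(ℝ^d)` norm. -/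
noncomputable def L2norm {d : ℕ} (f : Rd d → ℂ) : ℝ := (eLpNorm f 2 volume).toReal

/-- All pairs of multi-indices `(α, β)` with `|α| + |β| ≤ N`. -/
def mIdx (d N : ℕ) : Finset ((Fin d → ℕ) × (Fin d → ℕ)) :=
  ((Finset.Iic (fun _ => N : Fin d → ℕ)) ×ˢ (Finset.Iic (fun _ => N : Fin d → ℕ))).filter
    (fun p => msize p.1 + msize p.2 ≤ N)

/-- The `Q^s` norm: `‖f‖_{Q^s} = Σ_{|γ|+|δ| ≤ s} ‖x^δ ∂^γ f‖_{L²}`. -/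
noncomputable def Qnorm (d s : ℕ) (f : Rd d → ℂ) : ℝ :=
  ∑ p ∈ mIdx d s, L2norm (wD p.1 p.2 f)

/-- The partial sum `S_N^{s,ε}[u] = Σ_{|α|+|β| ≤ N} ε^{|α|+|β|} M(α,β)⁻¹ ‖x^β ∂^α u‖_{Q^s}`. -/
noncomputable def SN (d s : ℕ) (ε : ℝ) (N : ℕ) (u : Rd d → ℂ) : ℝ :=
  ∑ p ∈ mIdx d N, ε ^ (msize p.1 + msize p.2) / Mab p.1 p.2 * Qnorm d s (wD p.1 p.2 u)

/-- Real part of a point of ℂ^d. -/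
noncomputable def rePart {d : ℕ} (z : Cd d) : Rd d := WithLp.toLp 2 (fun j => (z j).re)
/-- Imaginary part of a point of ℂ^d. -/
noncomputable def imPart {d : ℕ} (z : Cd d) : Rd d := WithLp.toLp 2 (fun j => (z j).im)
/-- Canonical embedding ℝ^d → ℂ^d. -/
noncomputable def toCd {d : ℕ} (x : Rd d) : Cd d := WithLp.toLp 2 (fun j => (x j : ℂ))

/-- The open sector `{z = x + iy : |y| < ε (1 + |x|)}` in ℂ^d. -/
def sector (d : ℕ) (ε : ℝ) : Set (Cd d) :=
  {z | ‖imPart z‖ < ε * (1 + ‖rePart z‖)}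

/-- The Fourier transform `û(ξ) = ∫ e^{-i y·ξ} u(y) dy`. -/
noncomputable def FT {d : ℕ} (u : Rd d → ℂ) (ξ : Rd d) : ℂ :=
  ∫ y : Rd d, Complex.exp (-Complex.I * ((inner ℝ y ξ : ℝ) : ℂ)) * u y

/-- The pseudodifferential operator
`p(x,D)u(x) = (2π)^{-d} ∫ e^{i x·ξ} p(x,ξ) û(ξ) dξ`. -/
noncomputable def psiOp {d : ℕ} (p : Rd d → Rd d → ℂ) (u : Rd d → ℂ) : Rd d → ℂ :=
  fun x => (((2 * Real.pi) ^ d : ℝ) : ℂ)⁻¹ *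
    ∫ ξ : Rd d, Complex.exp (Complex.I * ((inner ℝ x ξ : ℝ) : ℂ)) * p x ξ * FT u ξ

/-- The mixed derivative `∂_ξ^α ∂_x^β p(x, ξ)` of a symbol. -/
noncomputable def symbDeriv {d : ℕ} (α β : Fin d → ℕ) (p : Rd d → Rd d → ℂ)
    (x ξ : Rd d) : ℂ :=
  mderiv β (fun x' => mderiv α (fun ξ' => p x' ξ') ξ) x

private lemma choose_le_two_pow' (n k : ℕ) : n.choose k ≤ 2 ^ n := by
  rcases le_or_gt k n with h | h
  · calc n.choose k ≤ ∑ i ∈ Finset.range (n+1), n.choose i :=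
        Finset.single_le_sum (f := fun i => n.choose i) (by intros; positivity)
          (Finset.mem_range.2 (Nat.lt_succ_of_le h))
    _ = 2 ^ n := Nat.sum_range_choose n
  · simp [Nat.choose_eq_zero_of_lt h]

private lemma fact_add_le' (a b : ℕ) :
    (a + b).factorial ≤ 2 ^ (a + b) * (a.factorial * b.factorial) := by
  calc (a+b).factorial = (a+b).choose b * a.factorial * b.factorial :=
        (Nat.add_choose_mul_factorial_mul_factorial a b).symm
    _ ≤ 2^(a+b) * a.factorial * b.factorial := by
        gcongr
        exact choose_le_two_pow' _ _
    _ = _ := by ring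

private lemma two_k_fact_le (k : ℕ) :
    (2*k).factorial ≤ 2^(2*k) * (k.factorial * k.factorial) := by
  calc (2*k).factorial = (k+k).factorial := by rw [two_mul]
    _ = (k+k).choose k * k.factorial * k.factorial :=
        (Nat.add_choose_mul_factorial_mul_factorial k k).symm
    _ ≤ 2^(k+k) * k.factorial * k.factorial := by
        gcongr; exact choose_le_two_pow' _ _
    _ = 2^(2*k) * (k.factorial * k.factorial) := by
        rw [← two_mul]; ring

private lemma key_exp {A B g t : ℝ} (hA : 0 < A) (hB : 0 ≤ B) (hg : 0 ≤ g) (ht : 0 ≤ t)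
    (h : ∀ k : ℕ, t ^ k * g ≤ A ^ k * k.factorial * B) :
    g ≤ 2 * B * Real.exp (-(t / (2 * A))) := by
  have hexp : Real.exp (t / (2*A)) = ∑' n : ℕ, (t/(2*A))^n / n.factorial := by
    rw [Real.exp_eq_exp_ℝ, NormedSpace.exp_eq_tsum_div]
  have hs : Summable (fun n : ℕ => (t/(2*A))^n / n.factorial * g) :=
    (Real.summable_pow_div_factorial _).mul_right g
  have hs2 : Summable (fun n : ℕ => B * (1/2:ℝ)^n) := summable_geometric_two.mul_left B
  have hmain : Real.exp (t/(2*A)) * g ≤ 2 * B := by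
    rw [hexp, ← tsum_mul_right]
    calc ∑' n : ℕ, (t/(2*A))^n / n.factorial * g ≤ ∑' n : ℕ, B * (1/2:ℝ)^n := by
          apply Summable.tsum_le_tsum _ hs hs2
          intro n
          have h1 : (t/(2*A))^n / n.factorial * g = t^n * g / ((2*A)^n * n.factorial) := by
            rw [div_pow]; ring
          rw [h1, div_le_iff₀ (by positivity)]
          calc t^n * g ≤ A^n * n.factorial * B := h n
            _ = B * (1/2)^n * ((2*A)^n * n.factorial) := by
                rw [mul_pow, div_pow, one_pow]
                field_simp
      _ = B * 2 := by rw [tsum_mul_left, tsum_geometric_two]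
      _ = 2 * B := by ring
  have he : (0:ℝ) < Real.exp (t/(2*A)) := Real.exp_pos _
  rw [Real.exp_neg, ← div_eq_mul_inv, le_div_iff₀ he]
  rw [mul_comm] at hmain
  exact hmain
/-- First step of the extension theorem: the estimates defining `H_sect` imply
`|x^β ∂^α f(x)| ≤ C'^{|α|+1} |α|! e^{-c|x|²}` whenever `|β| ≤ |α|`. -/
theorem statement1 (d : ℕ) (f : Rd d → ℂ) (hf : ContDiff ℝ (⊤ : ℕ∞) f)
    (C : ℝ) (hC : 1 ≤ C)
    (hest : ∀ α β : Fin d → ℕ, ∀ x : Rd d,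
      ‖wD α β f x‖ ≤ C ^ (msize α + msize β + 1) * Mab α β) :
    ∃ C' > (0:ℝ), ∃ c > (0:ℝ), ∀ α β : Fin d → ℕ, msize β ≤ msize α → ∀ x : Rd d,
      ‖wD α β f x‖ ≤ C' ^ (msize α + 1) * (Nat.factorial (msize α)) *
        Real.exp (-c * ‖x‖ ^ 2) := by
  have hC0 : (0:ℝ) < C := lt_of_lt_of_le one_pos hC
  refine ⟨4 * C^2, by positivity, 1 / (32 * ((d:ℝ)+1) * C^2), by positivity, ?_⟩
  intro α β hβ x
  set a := msize α with ha
  set b := msize β with hb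
  have hg : (0:ℝ) ≤ ‖wD α β f x‖ := norm_nonneg _
  have ht : (0:ℝ) ≤ ‖x‖^2 := sq_nonneg _
  set A : ℝ := 16 * ((d:ℝ)+1) * C^2 with hA
  set B : ℝ := 2^a * C^(2*a+1) * (a.factorial : ℝ) with hBdef
  have hA0 : 0 < A := by positivity
  have hB0 : (0:ℝ) ≤ B := by positivity
  have claim : ∀ k : ℕ, (‖x‖^2) ^ k * ‖wD α β f x‖ ≤ A ^ k * k.factorial * B := by
    intro k
    rcases Nat.eq_zero_or_pos k with rfl | hk
    · simp only [pow_zero, Nat.factorial_zero, Nat.cast_one, one_mul, mul_one]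
      have h0 := hest α β x
      have hM : Mab α β = (a.factorial : ℝ) := by
        unfold Mab
        rw [← ha, ← hb, max_eq_left hβ]
        exact Real.mul_self_sqrt (by positivity)
      rw [hM, ← ha, ← hb] at h0
      calc ‖wD α β f x‖ ≤ C^(a+b+1) * (a.factorial:ℝ) := h0
        _ ≤ C^(2*a+1) * (a.factorial:ℝ) := by
            gcongr
            · omega
        _ = 1 * (C^(2*a+1) * (a.factorial:ℝ)) := by ring
        _ ≤ 2^a * (C^(2*a+1) * (a.factorial:ℝ)) := by
            gcongr
            exact one_le_pow₀ one_le_two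
        _ = B := by rw [hBdef]; ring
    · rcases Nat.eq_zero_or_pos d with hd | hd
      · have hx0 : ‖x‖ = 0 := by
          rw [EuclideanSpace.norm_eq]
          subst hd
          simp
        rw [hx0]
        rw [zero_pow (by norm_num), zero_pow hk.ne', zero_mul]
        positivity
      · obtain ⟨j, -, hj⟩ := Finset.exists_max_image (Finset.univ : Finset (Fin d))
          (fun i => (x i)^2) ⟨⟨0, hd⟩, Finset.mem_univ _⟩
        have hnorm : ‖x‖^2 = ∑ i, (x i)^2 := by
          rw [EuclideanSpace.norm_eq, Real.sq_sqrt (by positivity)]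
          simp [sq_abs]
        have hxj : ‖x‖^2 ≤ (d:ℝ) * (x j)^2 := by
          rw [hnorm]
          calc ∑ i, (x i)^2 ≤ Finset.univ.card • ((x j)^2) :=
              Finset.sum_le_card_nsmul _ _ _ (fun i _ => hj i (Finset.mem_univ i))
            _ = (d:ℝ) * (x j)^2 := by
                simp [Finset.card_univ, nsmul_eq_mul]
        set β' : Fin d → ℕ := fun i => β i + if i = j then 2*k else 0 with hβ'
        have hsize' : msize β' = b + 2*k := by
          rw [hb]
          unfold msize
          rw [hβ']
          rw [Finset.sum_add_distrib, Finset.sum_ite_eq' Finset.univ j (fun _ => 2*k)]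
          simp
        have hmpow : mpow x β' = mpow x β * (x j)^(2*k) := by
          unfold mpow
          rw [hβ']
          simp only [pow_add]
          rw [Finset.prod_mul_distrib]
          congr 1
          have h1 : ∀ i : Fin d, (x i)^(if i = j then 2*k else 0)
              = if i = j then (x j)^(2*k) else 1 := by
            intro i
            split_ifs with h
            · rw [h]
            · exact pow_zero _
          simp_rw [h1]
          simp [Finset.prod_ite_eq' Finset.univ j (fun _ => (x j)^(2*k))]
        have habs : |x j| ^ (2*k) = (x j)^(2*k) := by
          rw [pow_mul, pow_mul, sq_abs]
        have hwd' : ‖wD α β' f x‖ = (x j)^(2*k) * ‖wD α β f x‖ := by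
          simp only [wD, hmpow]
          push_cast
          rw [norm_mul, norm_mul, norm_mul, norm_pow, Complex.norm_real,
            Complex.norm_real, Real.norm_eq_abs, Real.norm_eq_abs, habs]
          ring
        have hest' := hest α β' x
        rw [hsize', ← ha] at hest'
        have hMab : Mab α β' ≤ (a.factorial : ℝ) * 2^(a+4*k) * k.factorial := by
          have hfacN : (max (msize α) (msize β')).factorial
              ≤ 2^(a+2*k) * (a.factorial * (2^(2*k) * (k.factorial * k.factorial))) := by
            calc (max (msize α) (msize β')).factorial ≤ (a + 2*k).factorial := by
                  apply Nat.factorial_le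
                  rw [hsize', ← ha]
                  omega
              _ ≤ 2^(a+2*k) * (a.factorial * (2*k).factorial) := fact_add_le' a (2*k)
              _ ≤ 2^(a+2*k) * (a.factorial * (2^(2*k) * (k.factorial * k.factorial))) := by
                  gcongr
                  exact two_k_fact_le k
          unfold Mab
          rw [← Real.sqrt_mul (by positivity)]
          have hR : (0:ℝ) ≤ (a.factorial : ℝ) * 2^(a+4*k) * k.factorial := by
            positivity
          rw [show ((a.factorial:ℝ) * 2^(a+4*k) * k.factorial)
              = Real.sqrt (((a.factorial:ℝ) * 2^(a+4*k) * k.factorial)^2)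
              from (Real.sqrt_sq hR).symm]
          apply Real.sqrt_le_sqrt
          have hcast : ((max (msize α) (msize β')).factorial : ℝ)
              ≤ 2^(a+2*k) * ((a.factorial:ℝ) * (2^(2*k) * (k.factorial * k.factorial))) := by
            exact_mod_cast hfacN
          have hone : (1:ℝ) ≤ 2^(a+4*k) := one_le_pow₀ one_le_two
          calc ((msize α).factorial : ℝ) * ((max (msize α) (msize β')).factorial : ℝ)
              ≤ (a.factorial:ℝ) * (2^(a+2*k) * ((a.factorial:ℝ) * (2^(2*k) * (k.factorial * k.factorial)))) := by
                rw [← ha]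
                gcongr
            _ = (a.factorial:ℝ)^2 * 2^(a+4*k) * (k.factorial:ℝ)^2 := by ring
            _ ≤ (a.factorial:ℝ)^2 * (2^(a+4*k))^2 * (k.factorial:ℝ)^2 := by
                gcongr
                exact le_self_pow₀ hone two_ne_zero
            _ = ((a.factorial:ℝ) * 2^(a+4*k) * k.factorial)^2 := by ring
        have hMabnn : (0:ℝ) ≤ Mab α β' :=
          mul_nonneg (Real.sqrt_nonneg _) (Real.sqrt_nonneg _)
        calc (‖x‖^2)^k * ‖wD α β f x‖ ≤ ((d:ℝ) * (x j)^2)^k * ‖wD α β f x‖ := by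
              gcongr
            _ = (d:ℝ)^k * ((x j)^(2*k) * ‖wD α β f x‖) := by
                rw [mul_pow, pow_mul]; ring
            _ = (d:ℝ)^k * ‖wD α β' f x‖ := by rw [hwd']
            _ ≤ (d:ℝ)^k * (C^(a + (b + 2*k) + 1) * Mab α β') := by
                gcongr
            _ ≤ (d:ℝ)^k * (C^(2*a+2*k+1)
                * ((a.factorial:ℝ) * 2^(a+4*k) * k.factorial)) := by
                apply mul_le_mul_of_nonneg_left _ (by positivity)
                apply mul_le_mul _ hMab hMabnn (by positivity)
                apply pow_le_pow_right₀ hC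
                omega
            _ = (d:ℝ)^k * 2^(4*k) * C^(2*k) * k.factorial * B := by rw [hBdef]; ring
            _ = ((16:ℝ)*(d:ℝ)*C^2)^k * k.factorial * B := by
                rw [show ((2:ℝ))^(4*k) = 16^k by rw [pow_mul]; norm_num]
                ring
            _ ≤ A^k * k.factorial * B := by
                apply mul_le_mul_of_nonneg_right _ hB0
                apply mul_le_mul_of_nonneg_right _ (by positivity)
                apply pow_le_pow_left₀ (by positivity) _ k
                rw [hA]
                nlinarith [sq_nonneg C]
  have hkey := key_exp hA0 hB0 hg ht claim
  have hexpeq : Real.exp (-(‖x‖^2 / (2*A)))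
      = Real.exp (-(1/(32*((d:ℝ)+1)*C^2)) * ‖x‖^2) := by
    congr 1
    rw [hA]
    ring
  have hcoef : 2 * B ≤ (4*C^2)^(a+1) * (a.factorial:ℝ) := by
    rw [hBdef]
    have h2 : ((4:ℝ)*C^2)^(a+1) = 2^(2*a+2) * C^(2*a+2) := by
      rw [mul_pow, ← pow_mul, show (4:ℝ) = 2^2 by norm_num, ← pow_mul]
      ring
    rw [h2]
    have e1 : (2:ℝ)^(a+1) ≤ 2^(2*a+2) := by
      apply pow_le_pow_right₀ one_le_two
      omega
    have e2 : C^(2*a+1) ≤ C^(2*a+2) := by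
      apply pow_le_pow_right₀ hC
      omega
    calc 2 * (2^a * C^(2*a+1) * (a.factorial:ℝ))
        = 2^(a+1) * C^(2*a+1) * (a.factorial:ℝ) := by ring
      _ ≤ 2^(2*a+2) * C^(2*a+2) * (a.factorial:ℝ) := by
          apply mul_le_mul _ le_rfl (by positivity) (by positivity)
          exact mul_le_mul e1 e2 (by positivity) (by positivity)
  calc ‖wD α β f x‖ ≤ 2 * B * Real.exp (-(‖x‖^2 / (2*A))) := hkey
    _ ≤ (4*C^2)^(a+1) * (a.factorial:ℝ) * Real.exp (-(1/(32*((d:ℝ)+1)*C^2)) * ‖x‖^2) := by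
        rw [hexpeq]
        gcongr
    _ = (4*C^2)^(a+1) * ((a.factorial : ℕ):ℝ) * Real.exp (-(1/(32*((d:ℝ)+1)*C^2)) * ‖x‖^2) := rfl
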